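/- Let M ∈ {0,1}^{N×N} be a boolean matrix, let λ > 0, and suppose there exist vectors u_1, …, u_N, v_1, …, v_N in a real inner product space with ‖u_i‖ ≤ λ, ‖v_j‖ ≤ λ, and M(i,j) = ⟨u_i, v_j⟩ for all i,j. Then there exist unit vectors u'_1, …, u'_N, v'_1, …, v'_N in a real inner product space such that for all i,j: if M(i,j) = 0 then ⟨u'_i, v'_j⟩ = 0, and if M(i,j) = 1 then |⟨u'_i, v'_j⟩| ≥ 1/λ². (Γ₂ ⊆ SMAR ∩ coSMAR: matrices of γ₂-norm at most λ have a support-margin representation with margin 1/λ².) -/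

import Mathlib

open Matrix

theorem stmt19 {E : Type*} [NormedAddCommGroup E] [InnerProductSpace ℝ E]
    (N : ℕ) (M : Matrix (Fin N) (Fin N) Bool) (lam : ℝ) (hlam : 0 < lam)
    (u v : Fin N → E)
    (hu : ∀ i, ‖u i‖ ≤ lam) (hv : ∀ j, ‖v j‖ ≤ lam)
    (hM : ∀ i j, (inner ℝ (u i) (v j) : ℝ) = if M i j then 1 else 0) :
    ∃ (d : ℕ) (u' v' : Fin N → EuclideanSpace ℝ (Fin d)),
      (∀ i, ‖u' i‖ = 1) ∧ (∀ j, ‖v' j‖ = 1) ∧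
      (∀ i j,
        (M i j = false → (inner ℝ (u' i) (v' j) : ℝ) = 0) ∧
        (M i j = true → 1 / lam ^ 2 ≤ |(inner ℝ (u' i) (v' j) : ℝ)|)) := by
  classical
  let eqv := WithLp.equiv 2 (E × EuclideanSpace ℝ (Fin 2))
  have prodInner : ∀ (a b : E) (c d : EuclideanSpace ℝ (Fin 2)),
      (inner ℝ (eqv.symm (a, c)) (eqv.symm (b, d)) : ℝ) = inner ℝ a b + inner ℝ c d := by
    intro a b c d
    simp [eqv, WithLp.prod_inner_apply]
  let U : Fin N → WithLp 2 (E × EuclideanSpace ℝ (Fin 2)) := fun i =>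
    if h : u i = 0 then eqv.symm ((0 : E), EuclideanSpace.single 0 1)
    else eqv.symm ((‖u i‖)⁻¹ • u i, 0)
  let V : Fin N → WithLp 2 (E × EuclideanSpace ℝ (Fin 2)) := fun j =>
    if h : v j = 0 then eqv.symm ((0 : E), EuclideanSpace.single 1 1)
    else eqv.symm ((‖v j‖)⁻¹ • v j, 0)
  have sing00 : (inner ℝ (EuclideanSpace.single 0 (1:ℝ) : EuclideanSpace ℝ (Fin 2))
      (EuclideanSpace.single 0 1) : ℝ) = 1 := by
    rw [EuclideanSpace.inner_single_left]; simp
  have sing11 : (inner ℝ (EuclideanSpace.single 1 (1:ℝ) : EuclideanSpace ℝ (Fin 2))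
      (EuclideanSpace.single 1 1) : ℝ) = 1 := by
    rw [EuclideanSpace.inner_single_left]; simp
  have sing01 : (inner ℝ (EuclideanSpace.single 0 (1:ℝ) : EuclideanSpace ℝ (Fin 2))
      (EuclideanSpace.single 1 1) : ℝ) = 0 := by
    rw [EuclideanSpace.inner_single_left]; simp [EuclideanSpace.single_apply]
  have hUnorm : ∀ i, ‖U i‖ = 1 := by
    intro i
    have h2 : (inner ℝ (U i) (U i) : ℝ) = 1 := by
      by_cases h : u i = 0
      · simp only [U, h, dif_pos]
        rw [prodInner, sing00]
        simp
      · simp only [U, dif_neg h]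
        rw [prodInner]
        rw [real_inner_smul_left, real_inner_smul_right, real_inner_self_eq_norm_sq]
        have : ‖u i‖ ≠ 0 := norm_ne_zero_iff.mpr h
        field_simp
        simp
    have h3 := real_inner_self_eq_norm_sq (U i)
    nlinarith [norm_nonneg (U i)]
  have hVnorm : ∀ j, ‖V j‖ = 1 := by
    intro j
    have h2 : (inner ℝ (V j) (V j) : ℝ) = 1 := by
      by_cases h : v j = 0
      · simp only [V, h, dif_pos]
        rw [prodInner, sing11]
        simp
      · simp only [V, dif_neg h]
        rw [prodInner]
        rw [real_inner_smul_left, real_inner_smul_right, real_inner_self_eq_norm_sq]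
        have : ‖v j‖ ≠ 0 := norm_ne_zero_iff.mpr h
        field_simp
        simp
    have h3 := real_inner_self_eq_norm_sq (V j)
    nlinarith [norm_nonneg (V j)]
  have hinner : ∀ i j, (inner ℝ (U i) (V j) : ℝ) =
      (‖u i‖)⁻¹ * ((‖v j‖)⁻¹ * (inner ℝ (u i) (v j) : ℝ)) := by
    intro i j
    by_cases h1 : u i = 0 <;> by_cases h2 : v j = 0
    · simp only [U, V, dif_pos h1, dif_pos h2]
      rw [prodInner, sing01]
      simp [h1]
    · simp only [U, V, dif_pos h1, dif_neg h2]
      rw [prodInner]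
      simp [h1]
    · simp only [U, V, dif_neg h1, dif_pos h2]
      rw [prodInner]
      simp [h2]
    · simp only [U, V, dif_neg h1, dif_neg h2]
      rw [prodInner]
      rw [real_inner_smul_left, real_inner_smul_right]
      simp only [inner_zero_left, add_zero]
  let S : Submodule ℝ (WithLp 2 (E × EuclideanSpace ℝ (Fin 2))) := Submodule.span ℝ (Set.range U ∪ Set.range V)
  have : FiniteDimensional ℝ S :=
    FiniteDimensional.span_of_finite ℝ
      ((Set.finite_range U).union (Set.finite_range V))
  let iso := (stdOrthonormalBasis ℝ S).repr
  have hUmem : ∀ i, U i ∈ S := fun i =>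
    Submodule.subset_span (Set.mem_union_left _ ⟨i, rfl⟩)
  have hVmem : ∀ j, V j ∈ S := fun j =>
    Submodule.subset_span (Set.mem_union_right _ ⟨j, rfl⟩)
  refine ⟨Module.finrank ℝ S, fun i => iso ⟨U i, hUmem i⟩, fun j => iso ⟨V j, hVmem j⟩,
    ?_, ?_, ?_⟩
  · intro i; rw [iso.norm_map]; exact hUnorm i
  · intro j; rw [iso.norm_map]; exact hVnorm j
  · intro i j
    have key : (inner ℝ (iso ⟨U i, hUmem i⟩) (iso ⟨V j, hVmem j⟩) : ℝ)
        = (inner ℝ (U i) (V j) : ℝ) := by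
      rw [iso.inner_map_map]
      exact Submodule.coe_inner S _ _
    rw [key, hinner i j, hM i j]
    constructor
    · intro h; simp [h]
    · intro h
      simp only [h, if_true, mul_one]
      have hu0 : u i ≠ 0 := by
        intro h0
        have h1 := hM i j
        rw [h0, h] at h1
        simp at h1
      have hv0 : v j ≠ 0 := by
        intro h0
        have h1 := hM i j
        rw [h0, h] at h1
        simp at h1
      have hun : 0 < ‖u i‖ := norm_pos_iff.mpr hu0
      have hvn : 0 < ‖v j‖ := norm_pos_iff.mpr hv0
      rw [abs_of_pos (by positivity)]
      have hle : ‖u i‖ * ‖v j‖ ≤ lam ^ 2 := by nlinarith [hu i, hv j]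
      rw [← mul_inv, ← one_div]
      exact one_div_le_one_div_of_le (by positivity) hle
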